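/- For real z with 0 < z ≤ 1/4, Σ_{j=1}^{∞} (1/j) · C(2j,j) · z^j = 2 · ln((1 - √(1 - 4z)) / (2z)). -/

import Mathlib

open Real Filter

lemma cb_sq_bound (n : ℕ) : n.centralBinom ^ 2 * (3 * n + 1) ≤ 16 ^ n := by
  induction n with
  | zero => simp [Nat.centralBinom]
  | succ n ih =>
    have hrec := Nat.succ_mul_centralBinom_succ n
    have key : (2 * n + 1) ^ 2 * (3 * n + 4) ≤ (2 * n + 2) ^ 2 * (3 * n + 1) := by nlinarith
    -- compute: ((n+1) * centralBinom (n+1))^2 * (3n+4) = (2(2n+1))^2 cb n^2 (3n+4)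
    have h2 : ((n + 1) * Nat.centralBinom (n + 1)) ^ 2 * (3 * (n + 1) + 1)
        = 4 * ((2 * n + 1) ^ 2 * (3 * n + 4)) * n.centralBinom ^ 2 := by
      rw [hrec]; ring
    have h3 : (n + 1) ^ 2 * (Nat.centralBinom (n + 1) ^ 2 * (3 * (n + 1) + 1))
        ≤ (n + 1) ^ 2 * 16 ^ (n + 1) := by
      calc (n + 1) ^ 2 * (Nat.centralBinom (n + 1) ^ 2 * (3 * (n + 1) + 1))
          = 4 * ((2 * n + 1) ^ 2 * (3 * n + 4)) * n.centralBinom ^ 2 := by rw [← h2]; ring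
        _ ≤ 4 * ((2 * n + 2) ^ 2 * (3 * n + 1)) * n.centralBinom ^ 2 := by
            exact Nat.mul_le_mul_right _ (Nat.mul_le_mul_left 4 key)
        _ = (n + 1) ^ 2 * (16 * (n.centralBinom ^ 2 * (3 * n + 1))) := by ring
        _ ≤ (n + 1) ^ 2 * (16 * 16 ^ n) := by
            exact Nat.mul_le_mul_left _ (Nat.mul_le_mul_left 16 ih)
        _ = (n + 1) ^ 2 * 16 ^ (n + 1) := by ring
    exact Nat.le_of_mul_le_mul_left h3 (pow_pos n.succ_pos 2)

noncomputable def cbR (n : ℕ) : ℝ := (n.centralBinom : ℝ)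

lemma cbR_pos (n : ℕ) : 0 < cbR n := by
  have := n.centralBinom_pos; unfold cbR; exact_mod_cast this

lemma cbR_sqrt_bound (n : ℕ) : cbR n * Real.sqrt (3 * n + 1) ≤ 4 ^ n := by
  have h : (n.centralBinom : ℝ) ^ 2 * (3 * n + 1) ≤ 16 ^ n := by
    exact_mod_cast cb_sq_bound n
  have hnn : (0:ℝ) ≤ 3 * (n:ℝ) + 1 := by positivity
  have hsq : (cbR n * Real.sqrt (3 * n + 1)) ^ 2 ≤ ((4:ℝ) ^ n) ^ 2 := by
    rw [mul_pow, Real.sq_sqrt hnn]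
    calc cbR n ^ 2 * (3 * (n:ℝ) + 1) ≤ (16:ℝ) ^ n := h
      _ = ((4:ℝ) ^ n) ^ 2 := by
          rw [← pow_mul, show (16:ℝ) = 4 ^ 2 by norm_num, ← pow_mul, mul_comm]
  have h1 : (0:ℝ) ≤ cbR n * Real.sqrt (3 * n + 1) := by
    exact mul_nonneg (cbR_pos n).le (Real.sqrt_nonneg _)
  nlinarith [pow_pos (show (0:ℝ) < 4 by norm_num) n]

lemma cbR_le_four_pow (n : ℕ) : cbR n ≤ 4 ^ n := by
  have h1 : (1:ℝ) ≤ Real.sqrt (3 * n + 1) := by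
    have h0 : (0:ℝ) ≤ (n:ℝ) := n.cast_nonneg
    have := Real.sqrt_le_sqrt (show (1:ℝ) ≤ 3*(n:ℝ)+1 by linarith)
    simpa using this
  calc cbR n = cbR n * 1 := by ring
    _ ≤ cbR n * Real.sqrt (3 * n + 1) := by
        exact mul_le_mul_of_nonneg_left h1 (cbR_pos n).le
    _ ≤ 4 ^ n := cbR_sqrt_bound n

lemma summable_u : Summable (fun n : ℕ => cbR (n+1) / (n+1) * (1/4:ℝ) ^ (n+1)) := by
  have hv : Summable (fun k : ℕ => ((k:ℝ) ^ (3/2:ℝ))⁻¹) :=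
    Real.summable_nat_rpow_inv.mpr (by norm_num)
  have hv1 : Summable (fun n : ℕ => (((n+1:ℕ):ℝ) ^ (3/2:ℝ))⁻¹) :=
    (summable_nat_add_iff 1).mpr hv
  refine Summable.of_nonneg_of_le (fun n => ?_) (fun n => ?_) hv1
  · have := cbR_pos (n+1); positivity
  · set m : ℕ := n + 1 with hm
    have hm0 : (0:ℝ) < (m:ℝ) := by exact_mod_cast Nat.succ_pos n
    have hsm : (0:ℝ) < Real.sqrt m := Real.sqrt_pos.mpr hm0
    have h1 : cbR m * Real.sqrt m ≤ 4 ^ m := by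
      refine le_trans ?_ (cbR_sqrt_bound m)
      have : Real.sqrt (m:ℝ) ≤ Real.sqrt (3*m+1) := by
        apply Real.sqrt_le_sqrt; nlinarith [hm0]
      exact mul_le_mul_of_nonneg_left this (cbR_pos m).le
    have hrpow : ((m:ℝ) ^ (3/2:ℝ)) = (m:ℝ) * Real.sqrt m := by
      rw [show (3/2:ℝ) = 1 + 1/2 by norm_num, Real.rpow_add hm0, Real.rpow_one,
        Real.sqrt_eq_rpow]
    have hpush : (n:ℝ) + 1 = (m:ℝ) := by push_cast [hm]; ring
    rw [hpush, hrpow]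
    have key : cbR m * (1/4:ℝ)^m * Real.sqrt m ≤ 1 := by
      have h2 : cbR m * Real.sqrt m * (1/4:ℝ)^m ≤ 4^m * (1/4:ℝ)^m :=
        mul_le_mul_of_nonneg_right h1 (by positivity)
      have h3 : (4:ℝ)^m * (1/4:ℝ)^m = 1 := by
        rw [← mul_pow]; norm_num
      nlinarith [h2, h3]
    rw [inv_eq_one_div, div_mul_eq_mul_div, div_le_div_iff₀ hm0 (by positivity)]
    have hq : (0:ℝ) ≤ cbR m * (1/4:ℝ)^m := by
      have := cbR_pos m; positivity
    nlinarith [key, hm0, hq]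

noncomputable def Sfun (x : ℝ) : ℝ := ∑' n : ℕ, cbR n * x ^ n
noncomputable def Ffun (x : ℝ) : ℝ := ∑' n : ℕ, cbR (n+1) / (n+1) * x ^ (n+1)

lemma summable_S {x : ℝ} (hx : |x| < 1/4) : Summable (fun n : ℕ => cbR n * x ^ n) := by
  have hq : 4 * |x| < 1 := by linarith
  refine Summable.of_norm (Summable.of_nonneg_of_le (fun n => norm_nonneg _) (fun n => ?_)
    (summable_geometric_of_lt_one (by positivity) hq))
  rw [norm_mul, norm_pow, Real.norm_eq_abs, Real.norm_eq_abs,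
    abs_of_pos (cbR_pos n)]
  calc cbR n * |x| ^ n ≤ 4 ^ n * |x| ^ n :=
        mul_le_mul_of_nonneg_right (cbR_le_four_pow n) (by positivity)
    _ = (4 * |x|) ^ n := by rw [mul_pow]

lemma summable_D {x : ℝ} (hx : |x| < 1/4) : Summable (fun n : ℕ => cbR (n+1) * x ^ n) := by
  have hq : 4 * |x| < 1 := by linarith
  have hgeo : Summable (fun n : ℕ => 4 * (4 * |x|) ^ n) :=
    (summable_geometric_of_lt_one (by positivity) hq).mul_left 4
  refine Summable.of_norm (Summable.of_nonneg_of_le (fun n => norm_nonneg _) (fun n => ?_) hgeo)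
  rw [norm_mul, norm_pow, Real.norm_eq_abs, Real.norm_eq_abs, abs_of_pos (cbR_pos _)]
  calc cbR (n+1) * |x| ^ n ≤ 4 ^ (n+1) * |x| ^ n :=
        mul_le_mul_of_nonneg_right (cbR_le_four_pow (n+1)) (by positivity)
    _ = 4 * (4 * |x|) ^ n := by rw [mul_pow, pow_succ]; ring

lemma summable_u2 {q : ℝ} (hq0 : 0 ≤ q) (hq : q < 1) :
    Summable (fun n : ℕ => 4 * ((n:ℝ) * q ^ (n-1))) := by
  rw [← summable_nat_add_iff 1]
  have h1 : Summable (fun n : ℕ => (n:ℝ) * q ^ n) := by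
    have := summable_pow_mul_geometric_of_norm_lt_one (R := ℝ) 1
      (r := q) (by rwa [Real.norm_eq_abs, abs_of_nonneg hq0])
    simpa using this
  have h2 : Summable (fun n : ℕ => q ^ n) := summable_geometric_of_lt_one hq0 hq
  have h3 : Summable (fun n : ℕ => 4 * ((n:ℝ) * q ^ n + q ^ n)) := (h1.add h2).mul_left 4
  refine h3.congr fun n => ?_
  simp only [Nat.add_sub_cancel]
  push_cast
  ring

lemma summable_S_deriv {x : ℝ} (hx : |x| < 1/4) :
    Summable (fun n : ℕ => cbR n * (n * x ^ (n-1))) := by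
  have hq : 4 * |x| < 1 := by linarith
  have hgeo := summable_u2 (q := 4 * |x|) (by positivity) hq
  refine Summable.of_norm (Summable.of_nonneg_of_le (fun n => norm_nonneg _) (fun n => ?_) hgeo)
  rcases n with _ | m
  · simp
  · rw [norm_mul, norm_mul, norm_pow, Real.norm_eq_abs, Real.norm_eq_abs, Real.norm_eq_abs,
      abs_of_pos (cbR_pos _), Nat.abs_cast, Nat.add_sub_cancel]
    calc cbR (m+1) * ((m+1:ℕ) * |x| ^ m) ≤ 4 ^ (m+1) * ((m+1:ℕ) * |x| ^ m) :=
          mul_le_mul_of_nonneg_right (cbR_le_four_pow _) (by positivity)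
      _ = 4 * (((m+1:ℕ):ℝ) * (4*|x|) ^ (m+1-1)) := by
          simp only [Nat.add_sub_cancel]
          push_cast
          rw [mul_pow, pow_succ]
          ring

lemma deriv_term_bound {n : ℕ} {y r : ℝ} (hy : |y| ≤ r) :
    ‖cbR n * ((n:ℝ) * y ^ (n-1))‖ ≤ 4 * ((n:ℝ) * (4*r) ^ (n-1)) := by
  have hr0 : 0 ≤ r := le_trans (abs_nonneg y) hy
  rcases n with _ | m
  · simp
  · rw [norm_mul, norm_mul, norm_pow, Real.norm_eq_abs, Real.norm_eq_abs, Real.norm_eq_abs,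
      abs_of_pos (cbR_pos _), Nat.abs_cast, Nat.add_sub_cancel]
    have hyp : |y| ^ m ≤ r ^ m := pow_le_pow_left₀ (abs_nonneg y) hy m
    calc cbR (m+1) * ((m+1:ℕ) * |y| ^ m) ≤ 4 ^ (m+1) * ((m+1:ℕ) * r ^ m) := by
          have h1 : ((m+1:ℕ):ℝ) * |y| ^ m ≤ ((m+1:ℕ):ℝ) * r ^ m :=
            mul_le_mul_of_nonneg_left hyp (by positivity)
          have h2 : cbR (m+1) * ((m+1:ℕ) * |y| ^ m) ≤ 4 ^ (m+1) * ((m+1:ℕ) * |y| ^ m) :=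
            mul_le_mul_of_nonneg_right (cbR_le_four_pow _) (by positivity)
          exact h2.trans (mul_le_mul_of_nonneg_left h1 (by positivity))
      _ = 4 * (((m+1:ℕ):ℝ) * (4*r) ^ (m+1-1)) := by
          simp only [Nat.add_sub_cancel]
          push_cast
          rw [mul_pow, pow_succ]
          ring

lemma Sfun_eq : Sfun = fun x : ℝ => ∑' n : ℕ, cbR n * x ^ n := rfl

lemma S_hasDerivAt {x : ℝ} (hx : |x| < 1/4) :
    HasDerivAt Sfun (∑' n : ℕ, cbR n * ((n:ℝ) * x ^ (n-1))) x := by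
  set r : ℝ := (|x| + 1/4)/2 with hr
  have hax : 0 ≤ |x| := abs_nonneg x
  have hxr : |x| < r := by rw [hr]; linarith
  have hr4 : r < 1/4 := by rw [hr]; linarith
  have hq0 : (0:ℝ) ≤ 4*r := by linarith
  have hq : 4*r < 1 := by linarith
  have hu := summable_u2 hq0 hq
  rw [Sfun_eq]
  refine hasDerivAt_tsum_of_isPreconnected (y₀ := x) hu Metric.isOpen_ball
    ((convex_ball (0:ℝ) r).isPreconnected)
    (fun n y _ => (hasDerivAt_pow n y).const_mul (cbR n))
    (fun n y hy => ?_) ?_ ?_ ?_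
  · exact deriv_term_bound (le_of_lt (by simpa [Real.norm_eq_abs] using mem_ball_zero_iff.mp hy))
  · exact mem_ball_zero_iff.mpr (by simpa [Real.norm_eq_abs] using hxr)
  · exact summable_S hx
  · exact mem_ball_zero_iff.mpr (by simpa [Real.norm_eq_abs] using hxr)

lemma Ffun_eq : Ffun = fun x : ℝ => ∑' n : ℕ, cbR (n+1) / (n+1) * x ^ (n+1) := rfl

lemma Fterm_hasDerivAt (n : ℕ) (y : ℝ) :
    HasDerivAt (fun z : ℝ => cbR (n+1) / (n+1) * z ^ (n+1)) (cbR (n+1) * y ^ n) y := by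
  have h := (hasDerivAt_pow (n+1) y).const_mul (cbR (n+1) / (n+1))
  refine h.congr_deriv ?_
  have hne : ((n:ℝ)+1) ≠ 0 := by positivity
  simp only [Nat.add_sub_cancel]
  push_cast
  field_simp

lemma Fterm_bound {n : ℕ} {y r : ℝ} (hy : |y| ≤ r) :
    ‖cbR (n+1) * y ^ n‖ ≤ 4 * (4*r) ^ n := by
  have hr0 : 0 ≤ r := le_trans (abs_nonneg y) hy
  rw [norm_mul, norm_pow, Real.norm_eq_abs, Real.norm_eq_abs, abs_of_pos (cbR_pos _)]
  calc cbR (n+1) * |y| ^ n ≤ 4 ^ (n+1) * r ^ n := by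
        have h1 : |y| ^ n ≤ r ^ n := pow_le_pow_left₀ (abs_nonneg y) hy n
        have h2 : cbR (n+1) * |y| ^ n ≤ 4 ^ (n+1) * |y| ^ n :=
          mul_le_mul_of_nonneg_right (cbR_le_four_pow _) (by positivity)
        exact h2.trans (mul_le_mul_of_nonneg_left h1 (by positivity))
    _ = 4 * (4*r) ^ n := by rw [mul_pow, pow_succ]; ring

lemma F_hasDerivAt {x : ℝ} (hx : |x| < 1/4) :
    HasDerivAt Ffun (∑' n : ℕ, cbR (n+1) * x ^ n) x := by
  set r : ℝ := (|x| + 1/4)/2 with hr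
  have hax : 0 ≤ |x| := abs_nonneg x
  have hxr : |x| < r := by rw [hr]; linarith
  have hr4 : r < 1/4 := by rw [hr]; linarith
  have hr0 : 0 < r := lt_of_le_of_lt hax hxr
  have hq : 4*r < 1 := by linarith
  have hu : Summable (fun n : ℕ => 4 * (4*r) ^ n) :=
    (summable_geometric_of_lt_one (by positivity) hq).mul_left 4
  rw [Ffun_eq]
  refine hasDerivAt_tsum_of_isPreconnected (y₀ := 0) hu Metric.isOpen_ball
    ((convex_ball (0:ℝ) r).isPreconnected)
    (fun n y _ => Fterm_hasDerivAt n y)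
    (fun n y hy => Fterm_bound (le_of_lt (by simpa [Real.norm_eq_abs] using mem_ball_zero_iff.mp hy)))
    (mem_ball_zero_iff.mpr (by simpa using hr0)) ?_
    (mem_ball_zero_iff.mpr (by simpa [Real.norm_eq_abs] using hxr))
  refine summable_zero.congr fun n => ?_
  simp

lemma summable_F {x : ℝ} (hx : |x| ≤ 1/4) :
    Summable (fun n : ℕ => cbR (n+1) / (n+1) * x ^ (n+1)) := by
  refine Summable.of_norm (Summable.of_nonneg_of_le (fun n => norm_nonneg _)
    (fun n => ?_) summable_u)
  rw [norm_mul, norm_pow, Real.norm_eq_abs, Real.norm_eq_abs,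
    abs_of_pos (show (0:ℝ) < cbR (n+1)/((n:ℝ)+1) by have := cbR_pos (n+1); positivity)]
  have h1 : |x| ^ (n+1) ≤ (1/4:ℝ) ^ (n+1) := pow_le_pow_left₀ (abs_nonneg x) hx _
  have h2 : 0 ≤ cbR (n+1) / ((n:ℝ)+1) := by
    have := cbR_pos (n+1); positivity
  calc cbR (n+1) / ((n:ℝ)+1) * |x| ^ (n+1)
      ≤ cbR (n+1) / ((n:ℝ)+1) * (1/4:ℝ) ^ (n+1) := mul_le_mul_of_nonneg_left h1 h2

lemma S_ODE {x : ℝ} (hx : |x| < 1/4) :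
    (1 - 4*x) * (∑' n : ℕ, cbR n * ((n:ℝ) * x ^ (n-1))) = 2 * Sfun x := by
  set D := ∑' n : ℕ, cbR n * ((n:ℝ) * x ^ (n-1)) with hD_def
  have hD : HasSum (fun n : ℕ => cbR n * ((n:ℝ) * x ^ (n-1))) D := (summable_S_deriv hx).hasSum
  have hS : HasSum (fun n : ℕ => cbR n * x ^ n) (Sfun x) := (summable_S hx).hasSum
  have e1 : (fun n : ℕ => x * (cbR n * ((n:ℝ) * x ^ (n-1)))) = fun n : ℕ => cbR n * ((n:ℝ) * x ^ n) := by
    funext n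
    rcases n with _ | m
    · simp
    · simp only [Nat.add_sub_cancel]
      rw [pow_succ]
      ring
  have hxD : HasSum (fun n : ℕ => cbR n * ((n:ℝ) * x ^ n)) (x * D) := e1 ▸ (hD.mul_left x)
  have e2 : (fun n : ℕ => cbR (n+1) * (((n+1:ℕ):ℝ) * x ^ (n+1-1)))
      = fun n : ℕ => 4*(cbR n * ((n:ℝ) * x ^ n)) + 2*(cbR n * x ^ n) := by
    funext n
    have h := Nat.succ_mul_centralBinom_succ n
    have hR : ((n:ℝ)+1) * cbR (n+1) = 2*(2*(n:ℝ)+1) * cbR n := by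
      unfold cbR; exact_mod_cast h
    simp only [Nat.add_sub_cancel]
    push_cast
    linear_combination x ^ n * hR
  have hshift : HasSum (fun n : ℕ => cbR (n+1) * (((n+1:ℕ):ℝ) * x ^ (n+1-1))) D := by
    refine (hasSum_nat_add_iff (f := fun n : ℕ => cbR n * ((n:ℝ) * x ^ (n-1))) 1).mpr ?_
    simpa using hD
  have hcomb : HasSum (fun n : ℕ => 4*(cbR n * ((n:ℝ) * x ^ n)) + 2*(cbR n * x ^ n))
      (4*(x*D) + 2*Sfun x) := (hxD.mul_left 4).add (hS.mul_left 2)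
  have huniq : D = 4*(x*D) + 2*Sfun x := hshift.unique (e2 ▸ hcomb)
  linarith [huniq]

lemma Sfun_zero : Sfun 0 = 1 := by
  have h : HasSum (fun n : ℕ => cbR n * (0:ℝ) ^ n) (cbR 0 * (0:ℝ) ^ 0) :=
    hasSum_single (f := fun n : ℕ => cbR n * (0:ℝ) ^ n) 0 (fun b hb => by simp [zero_pow hb])
  have : Sfun 0 = cbR 0 * (0:ℝ) ^ 0 := h.tsum_eq
  simpa [cbR, Nat.centralBinom] using this

lemma sqrtS {x : ℝ} (hx0 : 0 ≤ x) (hx : x < 1/4) :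
    Real.sqrt (1 - 4*x) * Sfun x = 1 := by
  have habs : |x| < 1/4 := by rw [abs_of_nonneg hx0]; exact hx
  -- H is constant on Ioo (-(1/4)) (1/4)
  have hkey : ∀ y ∈ Set.Ioo (-(1/4):ℝ) (1/4), HasDerivAt (fun t => Sfun t ^ 2 * (1 - 4*t)) 0 y := by
    intro y hy
    have hyabs : |y| < 1/4 := abs_lt.mpr ⟨hy.1, hy.2⟩
    have hS' := S_hasDerivAt hyabs
    set D := ∑' n : ℕ, cbR n * ((n:ℝ) * y ^ (n-1))
    have hlin : HasDerivAt (fun t : ℝ => 1 - 4*t) (-4) y := by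
      simpa using ((hasDerivAt_id y).const_mul (4:ℝ)).const_sub 1
    have hmul := (hS'.pow 2).mul hlin
    have hODE := S_ODE hyabs
    refine hmul.congr_deriv ?_
    push_cast
    simp only [pow_one, Pi.pow_apply]
    linear_combination (2*Sfun y) * hODE
  have hdiff : DifferentiableOn ℝ (fun t => Sfun t ^ 2 * (1 - 4*t)) (Set.Ioo (-(1/4):ℝ) (1/4)) :=
    fun y hy => ((hkey y hy).differentiableAt).differentiableWithinAt
  have hmemx : x ∈ Set.Ioo (-(1/4):ℝ) (1/4) := ⟨by linarith, hx⟩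
  have hmem0 : (0:ℝ) ∈ Set.Ioo (-(1/4):ℝ) (1/4) := ⟨by norm_num, by norm_num⟩
  have hconst := (convex_Ioo (-(1/4):ℝ) (1/4)).is_const_of_fderivWithin_eq_zero hdiff
    (fun y hy => by
      rw [fderivWithin_of_isOpen isOpen_Ioo hy, (hkey y hy).hasFDerivAt.fderiv]
      ext
      simp) hmemx hmem0
  have hH : Sfun x ^ 2 * (1 - 4*x) = 1 := by
    rw [hconst]
    simp [Sfun_zero]
  have hu0 : (0:ℝ) ≤ 1 - 4*x := by linarith
  have hsq := Real.sq_sqrt hu0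
  have hSpos : 1 ≤ Sfun x := by
    have hS : HasSum (fun n : ℕ => cbR n * x ^ n) (Sfun x) := (summable_S habs).hasSum
    have h0 : cbR 0 * x ^ 0 = 1 := by simp [cbR, Nat.centralBinom]
    calc (1:ℝ) = cbR 0 * x ^ 0 := h0.symm
      _ ≤ Sfun x := le_hasSum hS 0 (fun b _ => by
          have := cbR_pos b; positivity)
  have ha : 0 ≤ Real.sqrt (1 - 4*x) * Sfun x :=
    mul_nonneg (Real.sqrt_nonneg _) (by linarith)
  nlinarith [hsq, hH, ha]

noncomputable def gfun (x : ℝ) : ℝ := 2 * Real.log (2 / (1 + Real.sqrt (1 - 4*x)))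

lemma gfun_cont : Continuous gfun := by
  have h1 : Continuous fun x : ℝ => 1 + Real.sqrt (1 - 4*x) := by
    exact continuous_const.add (Real.continuous_sqrt.comp (by continuity))
  have hne : ∀ x : ℝ, 1 + Real.sqrt (1 - 4*x) ≠ 0 := fun x => by
    have := Real.sqrt_nonneg (1 - 4*x); positivity
  have h2 : Continuous fun x : ℝ => 2 / (1 + Real.sqrt (1 - 4*x)) :=
    continuous_const.div h1 hne
  have h3 : ∀ x : ℝ, 2 / (1 + Real.sqrt (1 - 4*x)) ≠ 0 := fun x => by
    have := Real.sqrt_nonneg (1 - 4*x); positivity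
  exact continuous_const.mul (h2.log h3)

lemma gfun_zero : gfun 0 = 0 := by
  unfold gfun
  norm_num

lemma G_eq_gfun {x : ℝ} (hx0 : 0 < x) (hx : x ≤ 1/4) :
    2 * Real.log ((1 - Real.sqrt (1 - 4*x)) / (2*x)) = gfun x := by
  unfold gfun
  congr 1
  have hu : (0:ℝ) ≤ 1 - 4*x := by linarith
  have hsq := Real.sq_sqrt hu
  have h1 : (0:ℝ) < 1 + Real.sqrt (1 - 4*x) := by
    have := Real.sqrt_nonneg (1 - 4*x); linarith
  congr 1
  rw [div_eq_div_iff (by positivity) (ne_of_gt h1)]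
  nlinarith [hsq]

lemma gfun_hasDerivAt {x : ℝ} (hx0 : 0 < x) (hx : x < 1/4) :
    HasDerivAt gfun (4 / (Real.sqrt (1 - 4*x) * (1 + Real.sqrt (1 - 4*x)))) x := by
  have hu : (0:ℝ) < 1 - 4*x := by linarith
  have hsqpos : 0 < Real.sqrt (1 - 4*x) := Real.sqrt_pos.mpr hu
  have h1 : (0:ℝ) < 1 + Real.sqrt (1 - 4*x) := by linarith
  have hinner : HasDerivAt (fun y : ℝ => 1 - 4*y) (-4) x := by
    simpa using ((hasDerivAt_id x).const_mul (4:ℝ)).const_sub 1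
  have hsq : HasDerivAt (fun y : ℝ => Real.sqrt (1 - 4*y)) (-2 / Real.sqrt (1 - 4*x)) x := by
    have h := (Real.hasDerivAt_sqrt (ne_of_gt hu)).comp x hinner
    refine h.congr_deriv ?_
    field_simp
    ring
  have hden : HasDerivAt (fun y : ℝ => 1 + Real.sqrt (1 - 4*y)) (-2 / Real.sqrt (1 - 4*x)) x :=
    hsq.const_add 1
  have hlog : HasDerivAt (fun y : ℝ => Real.log (1 + Real.sqrt (1 - 4*y)))
      ((-2 / Real.sqrt (1 - 4*x)) / (1 + Real.sqrt (1 - 4*x))) x :=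
    hden.log (ne_of_gt h1)
  have hrw : gfun = fun y : ℝ => 2 * (Real.log 2 - Real.log (1 + Real.sqrt (1 - 4*y))) := by
    funext y
    unfold gfun
    rw [Real.log_div (by norm_num) (by
      have := Real.sqrt_nonneg (1 - 4*y); positivity)]
  rw [hrw]
  have h := ((hlog.const_sub (Real.log 2)).const_mul (2:ℝ))
  refine h.congr_deriv ?_
  field_simp
  ring

lemma xD_eq {y : ℝ} (hy : |y| < 1/4) :
    y * (∑' n : ℕ, cbR (n+1) * y ^ n) = Sfun y - 1 := by
  set T := ∑' n : ℕ, cbR (n+1) * y ^ n with hT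
  have hD : HasSum (fun n : ℕ => cbR (n+1) * y ^ n) T := (summable_D hy).hasSum
  have e1 : (fun n : ℕ => y * (cbR (n+1) * y ^ n)) = fun n : ℕ => cbR (n+1) * y ^ (n+1) := by
    funext n; rw [pow_succ]; ring
  have h1 : HasSum (fun n : ℕ => cbR (n+1) * y ^ (n+1)) (y * T) := e1 ▸ (hD.mul_left y)
  have hS : HasSum (fun n : ℕ => cbR n * y ^ n) (Sfun y) := (summable_S hy).hasSum
  have h2 : HasSum (fun n : ℕ => cbR (n+1) * y ^ (n+1)) (Sfun y - 1) := by
    refine (hasSum_nat_add_iff (f := fun n : ℕ => cbR n * y ^ n) 1).mpr ?_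
    have h0 : (Sfun y - 1) + ∑ i ∈ Finset.range 1, cbR i * y ^ i = Sfun y := by
      simp [cbR, Nat.centralBinom]
    rw [h0]
    exact hS
  exact h1.unique h2

lemma DF_eq {y : ℝ} (hy0 : 0 < y) (hy4 : y < 1/4) :
    (∑' n : ℕ, cbR (n+1) * y ^ n)
      = 4 / (Real.sqrt (1 - 4*y) * (1 + Real.sqrt (1 - 4*y))) := by
  have hyabs : |y| < 1/4 := by rw [abs_of_pos hy0]; exact hy4
  set s := Real.sqrt (1 - 4*y) with hs_def
  set D := ∑' n : ℕ, cbR (n+1) * y ^ n with hD_def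
  have hxD : y * D = Sfun y - 1 := xD_eq hyabs
  have hsS : s * Sfun y = 1 := sqrtS hy0.le hy4
  have hu : (0:ℝ) < 1 - 4*y := by linarith
  have hsq : s ^ 2 = 1 - 4*y := Real.sq_sqrt hu.le
  have hspos : 0 < s := Real.sqrt_pos.mpr hu
  have h1 : (0:ℝ) < 1 + s := by linarith
  rw [eq_div_iff (ne_of_gt (mul_pos hspos h1))]
  apply mul_left_cancel₀ (ne_of_gt hy0)
  linear_combination (s*(1+s))*hxD + (1+s)*hsS - hsq

lemma F_eq_g {x : ℝ} (hx0 : 0 < x) (hx : x < 1/4) : Ffun x = gfun x := by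
  have key : ∀ y ∈ Set.Ioo (0:ℝ) (1/4), HasDerivAt (fun t => Ffun t - gfun t) 0 y := by
    intro y hy
    have hy0 := hy.1
    have hy4 := hy.2
    have hyabs : |y| < 1/4 := by rw [abs_of_pos hy0]; exact hy4
    have hF := F_hasDerivAt hyabs
    have hg := gfun_hasDerivAt hy0 hy4
    rw [← DF_eq hy0 hy4] at hg
    exact (hF.sub hg).congr_deriv (sub_self _)
  have hdiff : DifferentiableOn ℝ (fun t => Ffun t - gfun t) (Set.Ioo (0:ℝ) (1/4)) :=
    fun y hy => ((key y hy).differentiableAt).differentiableWithinAt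
  have hconst : ∀ t ∈ Set.Ioo (0:ℝ) (1/4), Ffun t - gfun t = Ffun x - gfun x := fun t ht =>
    (convex_Ioo (0:ℝ) (1/4)).is_const_of_fderivWithin_eq_zero hdiff
      (fun y hy => by
        rw [fderivWithin_of_isOpen isOpen_Ioo hy, (key y hy).hasFDerivAt.fderiv]
        ext
        simp) ht ⟨hx0, hx⟩
  have hcont0 : ContinuousAt Ffun 0 := (F_hasDerivAt (by norm_num : |(0:ℝ)| < 1/4)).continuousAt
  have hF0 : Ffun 0 = 0 := by
    rw [Ffun_eq]
    simp
  have hlim : Filter.Tendsto (fun t => Ffun t - gfun t) (nhdsWithin 0 (Set.Ioi (0:ℝ))) (nhds 0) := by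
    have h := hcont0.tendsto.sub (gfun_cont.tendsto 0)
    rw [hF0, gfun_zero, sub_zero] at h
    exact h.mono_left nhdsWithin_le_nhds
  have hev : ∀ᶠ t in nhdsWithin 0 (Set.Ioi (0:ℝ)), Ffun t - gfun t = Ffun x - gfun x := by
    filter_upwards [Ioo_mem_nhdsGT_of_mem (show (0:ℝ) ∈ Set.Ico (0:ℝ) (1/4) from ⟨le_refl _, by norm_num⟩)] with t ht
    exact hconst t ht
  have h2 : Filter.Tendsto (fun _ : ℝ => Ffun x - gfun x) (nhdsWithin 0 (Set.Ioi (0:ℝ)))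
      (nhds (Ffun x - gfun x)) := tendsto_const_nhds
  have h3 : Filter.Tendsto (fun _ : ℝ => Ffun x - gfun x) (nhdsWithin 0 (Set.Ioi (0:ℝ)))
      (nhds 0) := Filter.Tendsto.congr' hev hlim
  haveI : (nhdsWithin (0:ℝ) (Set.Ioi (0:ℝ))).NeBot := nhdsGT_neBot 0
  have := tendsto_nhds_unique h3 h2
  linarith

lemma Ffun_continuousOn : ContinuousOn Ffun (Set.Icc (-(1/4):ℝ) (1/4)) := by
  rw [Ffun_eq]
  refine (tendstoUniformlyOn_tsum summable_u (fun n x hx => ?_)).continuousOn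
    (Filter.Frequently.of_forall fun t => ?_)
  · have hx4 : |x| ≤ 1/4 := abs_le.mpr ⟨hx.1, hx.2⟩
    rw [norm_mul, norm_pow, Real.norm_eq_abs, Real.norm_eq_abs,
      abs_of_pos (show (0:ℝ) < cbR (n+1)/((n:ℝ)+1) by have := cbR_pos (n+1); positivity)]
    have h1 : |x| ^ (n+1) ≤ (1/4:ℝ) ^ (n+1) := pow_le_pow_left₀ (abs_nonneg x) hx4 _
    have h2 : 0 ≤ cbR (n+1) / ((n:ℝ)+1) := by
      have := cbR_pos (n+1); positivity
    exact mul_le_mul_of_nonneg_left h1 h2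
  · exact (continuous_finset_sum t fun n _ => continuous_const.mul (continuous_pow (n+1))).continuousOn

lemma F_quarter : Ffun (1/4) = gfun (1/4) := by
  have hmem : (1/4:ℝ) ∈ Set.Icc (-(1/4):ℝ) (1/4) := ⟨by norm_num, le_refl _⟩
  have h1 : Filter.Tendsto Ffun (nhdsWithin (1/4:ℝ) (Set.Ioo (0:ℝ) (1/4))) (nhds (Ffun (1/4))) :=
    (Ffun_continuousOn (1/4) hmem).mono (fun t ht => ⟨by linarith [ht.1], ht.2.le⟩)
  have h2 : Filter.Tendsto gfun (nhdsWithin (1/4:ℝ) (Set.Ioo (0:ℝ) (1/4))) (nhds (gfun (1/4))) :=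
    (gfun_cont.tendsto _).mono_left nhdsWithin_le_nhds
  have hne : (nhdsWithin (1/4:ℝ) (Set.Ioo (0:ℝ) (1/4))).NeBot := by
    apply mem_closure_iff_nhdsWithin_neBot.mp
    rw [closure_Ioo (by norm_num : (0:ℝ) ≠ 1/4)]
    exact ⟨by norm_num, le_refl _⟩
  have hev : Ffun =ᶠ[nhdsWithin (1/4:ℝ) (Set.Ioo (0:ℝ) (1/4))] gfun := by
    filter_upwards [self_mem_nhdsWithin] with t ht
    exact F_eq_g ht.1 ht.2
  exact tendsto_nhds_unique (h1.congr' hev) h2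

/-- Lehmer's identity: for `0 < z ≤ 1/4`,
`Σ_{j=1}^∞ (1/j) C(2j,j) z^j = 2 ln((1 - √(1-4z))/(2z))`. -/
theorem lehmer_central_binomial_series (z : ℝ) (hz : 0 < z) (hz' : z ≤ 1 / 4) :
    HasSum (fun j : ℕ =>
      (1 / (j + 1 : ℝ)) * ((2 * (j + 1)).choose (j + 1) : ℝ) * z ^ (j + 1))
      (2 * Real.log ((1 - Real.sqrt (1 - 4 * z)) / (2 * z))) := by
  have hsummand : (fun j : ℕ => (1 / (j + 1 : ℝ)) * ((2 * (j + 1)).choose (j + 1) : ℝ) * z ^ (j + 1))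
      = fun j : ℕ => cbR (j+1) / (j+1) * z ^ (j+1) := by
    funext j
    have : ((2 * (j + 1)).choose (j + 1) : ℝ) = cbR (j+1) := by
      unfold cbR
      rw [Nat.centralBinom_eq_two_mul_choose]
    rw [this]
    ring
  rw [hsummand, G_eq_gfun hz hz']
  have habs : |z| ≤ 1/4 := by rw [abs_of_pos hz]; exact hz'
  have hs : HasSum (fun j : ℕ => cbR (j+1) / (j+1) * z ^ (j+1)) (Ffun z) :=
    (summable_F habs).hasSum
  have hFg : Ffun z = gfun z := by
    rcases lt_or_eq_of_le hz' with h | h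
    · exact F_eq_g hz h
    · rw [h]; exact F_quarter
  rwa [hFg] at hs
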